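/- arXiv:2211.11961 — 2 statements merged into one kernel-verified Lean document; each statement's English description precedes it below -/
import Mathlib

section
/- Consider a sequence of independent trials where in trial i a facility is opened with probability p_i = min(1, d_i·w_i/f) and if not opened a cost p_i·f = d_i·w_i is incurred (when p_i < 1), stopping when the first facility is opened. Define C_m = p_m·f·(1−p_m) and recursively C_i = (1−p_i)·(p_i·f + C_{i+1}). Then C_1 ≤ f. -/
/-- Backward recursion bounding the expected cost paid before the first facility opens:
if `C m = p m · f · (1 − p m)` and `C i = (1 − p i)(p i · f + C (i+1))` for `1 ≤ i < m`,
with all `p i ∈ [0,1]` and `f > 0`, then `C 1 ≤ f`. -/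
theorem expected_cost_before_first_facility (f : ℝ) (hf : 0 < f)
    (m : ℕ) (hm : 1 ≤ m) (p C : ℕ → ℝ)
    (hp0 : ∀ i, 0 ≤ p i) (hp1 : ∀ i, p i ≤ 1)
    (hCm : C m = p m * f * (1 - p m))
    (hC : ∀ i, 1 ≤ i → i < m → C i = (1 - p i) * (p i * f + C (i + 1))) :
    C 1 ≤ f := by
  have key : ∀ k i, 1 ≤ i → i + k = m → C i ≤ f := by
    intro k
    induction k with
    | zero =>
      intro i hi h
      simp at h
      subst h
      rw [hCm]
      nlinarith [mul_nonneg hf.le (sub_nonneg.2 (hp1 i)), mul_nonneg hf.le (sq_nonneg (p i))]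
    | succ n ih =>
      intro i hi h
      have hlt : i < m := by omega
      have h1 : C (i + 1) ≤ f := ih (i + 1) (by omega) (by omega)
      rw [hC i hi hlt]
      nlinarith [mul_nonneg (sub_nonneg.2 (hp1 i)) (sub_nonneg.2 h1),
        mul_nonneg (mul_nonneg (hp0 i) (hp0 i)) hf.le]
  exact key (m - 1) 1 le_rfl (by omega)
end

section
/- In the Selection Process on [n] with a uniformly random arrival order and adversarial non-increasing probability vectors (p_{i,j} ≥ p_{i+1,j} for all i, j), the expected number of selected elements is O(log n); specifically, it is at most c·log n for an absolute constant c (e.g., selections can be coupled so that each selection discards at least a 1/3-fraction of remaining candidate elements in expectation). -/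
/-- In the Selection Process, given the arrival order `π` (the element arriving at time
`i` is `π i`) and coin outcomes `b` (the coin at time `i` comes up with probability
`p i (π i)`), the element arriving at time `i` is selected iff its coin came up and it
exceeds all previously selected elements. -/
def isSelected (n : ℕ) (π : Equiv.Perm (Fin n)) (b : Fin n → Bool) (i : Fin n) : Prop :=
  b i = true ∧ ∀ j : Fin n, (h : j < i) → isSelected n π b j → π j < π i
termination_by i.1
decreasing_by exact h

namespace SelectionAux

open Finset

variable {n : ℕ}

lemma isSelected_b (π : Equiv.Perm (Fin n)) (b : Fin n → Bool) {i : Fin n}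
    (h : isSelected n π b i) : b i = true := by
  rw [isSelected] at h; exact h.1

lemma exists_selected_ge (π : Equiv.Perm (Fin n)) (b : Fin n → Bool) {j : Fin n}
    (hbj : b j = true) :
    ∃ k, k ≤ j ∧ isSelected n π b k ∧ π j ≤ π k := by
  by_cases hs : isSelected n π b j
  · exact ⟨j, le_refl _, hs, le_refl _⟩
  · rw [isSelected] at hs
    push_neg at hs
    obtain ⟨k, hk, hks, hge⟩ := hs hbj
    exact ⟨k, le_of_lt hk, hks, hge⟩

lemma isSelected_iff (π : Equiv.Perm (Fin n)) (b : Fin n → Bool) (i : Fin n) :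
    isSelected n π b i ↔ (b i = true ∧ ∀ j, j < i → b j = true → π j < π i) := by
  constructor
  · intro h
    rw [isSelected] at h
    refine ⟨h.1, fun j hj hbj => ?_⟩
    obtain ⟨k, hkj, hks, hle⟩ := exists_selected_ge π b hbj
    exact lt_of_le_of_lt hle (h.2 k (lt_of_le_of_lt hkj hj) hks)
  · intro ⟨hb, h⟩
    rw [isSelected]
    exact ⟨hb, fun j hj hs => h j hj (isSelected_b π b hs)⟩

lemma card_eq (π : Equiv.Perm (Fin n)) (b : Fin n → Bool) :
    (Nat.card {i : Fin n // isSelected n π b i} : ℝ)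
    = ∑ i : Fin n, if (b i = true ∧ ∀ j, j < i → b j = true → π j < π i) then (1:ℝ) else 0 := by
  have h1 : Nat.card {i : Fin n // isSelected n π b i}
      = Nat.card {i : Fin n // b i = true ∧ ∀ j, j < i → b j = true → π j < π i} :=
    Nat.card_congr (Equiv.subtypeEquivRight fun i => isSelected_iff π b i)
  rw [h1, Nat.card_eq_fintype_card, Fintype.card_subtype, Finset.card_filter]
  push_cast
  rfl

lemma coin_sum (p : Fin n → Fin n → ℝ) (π : Equiv.Perm (Fin n)) (i : Fin n) :
    ∑ b : Fin n → Bool, (∏ j, if b j then p j (π j) else 1 - p j (π j)) *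
      (if (b i = true ∧ ∀ j, j < i → b j = true → π j < π i) then (1:ℝ) else 0)
    = ∏ j : Fin n, (if j = i then p i (π i)
        else if (j < i ∧ π i < π j) then 1 - p j (π j) else 1) := by
  classical
  set w : Fin n → Bool → ℝ := fun j x => if x then p j (π j) else 1 - p j (π j) with hw
  set χ : Fin n → Bool → ℝ := fun j x =>
    if j = i then (if x then (1:ℝ) else 0)
    else if (j < i ∧ π i < π j) then (if x then (0:ℝ) else 1) else 1 with hχ
  have hind : ∀ b : Fin n → Bool,
      (if (b i = true ∧ ∀ j, j < i → b j = true → π j < π i) then (1:ℝ) else 0)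
      = ∏ j, χ j (b j) := by
    intro b
    by_cases hP : (b i = true ∧ ∀ j, j < i → b j = true → π j < π i)
    · rw [if_pos hP]
      symm
      apply Finset.prod_eq_one
      intro j _
      by_cases hji : j = i
      · subst hji; simp [hχ, hP.1]
      · simp only [hχ, if_neg hji]
        by_cases hblock : (j < i ∧ π i < π j)
        · rw [if_pos hblock]
          have hbj : b j = false := by
            by_contra hbj
            have := hP.2 j hblock.1 (by simpa using hbj)
            exact absurd hblock.2 (asymm this)
          simp [hbj]
        · rw [if_neg hblock]
    · rw [if_neg hP]
      symm
      push_neg at hP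
      by_cases hbi : b i = true
      · obtain ⟨j, hji, hbj, hnlt⟩ := hP hbi
        have hne : j ≠ i := ne_of_lt hji
        have hgt : π i < π j :=
          lt_of_le_of_ne hnlt (fun h => hne (π.injective h).symm)
        apply Finset.prod_eq_zero (Finset.mem_univ j)
        simp [hχ, hne, hji, hgt, hbj]
      · apply Finset.prod_eq_zero (Finset.mem_univ i)
        simp only [Bool.not_eq_true] at hbi
        simp [hχ, hbi]
  calc ∑ b : Fin n → Bool, (∏ j, if b j then p j (π j) else 1 - p j (π j)) *
        (if (b i = true ∧ ∀ j, j < i → b j = true → π j < π i) then (1:ℝ) else 0)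
      = ∑ b : Fin n → Bool, ∏ j, (w j (b j) * χ j (b j)) := by
        apply Finset.sum_congr rfl
        intro b _
        rw [hind, ← Finset.prod_mul_distrib]
    _ = ∏ j : Fin n, ∑ x : Bool, w j x * χ j x := by
        rw [Finset.prod_univ_sum (fun _ => (Finset.univ : Finset Bool))
          (fun j x => w j x * χ j x), Fintype.piFinset_univ]
    _ = ∏ j : Fin n, (if j = i then p i (π i)
        else if (j < i ∧ π i < π j) then 1 - p j (π j) else 1) := by
        apply Finset.prod_congr rfl
        intro j _
        rw [Fintype.sum_bool]
        by_cases hji : j = i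
        · subst hji; simp [hw, hχ]
        · by_cases hblock : (j < i ∧ π i < π j)
          · simp [hw, hχ, hji, hblock]
          · simp only [hw, hχ, if_neg hji, if_neg hblock]
            norm_num

lemma telescope (q : Fin n → ℝ) (B : Finset (Fin n)) :
    ∑ u ∈ B, q u * ∏ v ∈ B.filter (fun v => u < v), (1 - q v)
      = 1 - ∏ v ∈ B, (1 - q v) := by
  induction B using Finset.induction_on_min with
  | empty => simp
  | insert a s ha ih =>
    have hnot : a ∉ s := fun h => lt_irrefl a (ha a h)
    rw [Finset.sum_insert hnot, Finset.prod_insert hnot]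
    have h1 : (insert a s).filter (fun v => a < v) = s := by
      ext v
      simp only [Finset.mem_filter, Finset.mem_insert]
      constructor
      · rintro ⟨(rfl | hv), hav⟩
        · exact absurd hav (lt_irrefl _)
        · exact hv
      · intro hv; exact ⟨Or.inr hv, ha v hv⟩
    have h2 : ∀ u ∈ s, (insert a s).filter (fun v => u < v) = s.filter (fun v => u < v) := by
      intro u hu
      ext v
      simp only [Finset.mem_filter, Finset.mem_insert]
      constructor
      · rintro ⟨(rfl | hv), huv⟩
        · exact absurd huv (lt_asymm (ha u hu))
        · exact ⟨hv, huv⟩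
      · rintro ⟨hv, huv⟩; exact ⟨Or.inr hv, huv⟩
    rw [h1, Finset.sum_congr rfl (fun u hu => by rw [h2 u hu]), ih]
    ring

lemma Iic_eq_filter (i : Fin n) : Iic i = Finset.univ.filter (fun j => j ≤ i) := by
  ext j; simp

lemma sym (q : Fin n → ℝ) (i k : Fin n) (hk : k ≤ i) :
    (∑ π : Equiv.Perm (Fin n),
        q (π k) * ∏ j ∈ (Iic i).filter (fun j => π k < π j), (1 - q (π j)))
    = ∑ π : Equiv.Perm (Fin n),
        q (π i) * ∏ j ∈ (Iic i).filter (fun j => π i < π j), (1 - q (π j)) := by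
  set σ := Equiv.swap k i with hσ
  have hσi : σ i = k := Equiv.swap_apply_right k i
  have hmem : ∀ j : Fin n, σ j ≤ i ↔ j ≤ i := by
    intro j
    by_cases h1 : j = k
    · subst h1; simp [hσ, Equiv.swap_apply_left, hk]
    · by_cases h2 : j = i
      · subst h2; simp [hσi, hk]
      · rw [Equiv.swap_apply_of_ne_of_ne h1 h2]
  apply Fintype.sum_equiv (Equiv.mulRight σ)
  intro π
  show q (π k) * _ = q ((π * σ) i) *
      ∏ j ∈ (Iic i).filter (fun j => (π * σ) i < (π * σ) j), (1 - q ((π * σ) j))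
  have h0 : (π * σ) i = π k := by
    simp [Equiv.Perm.mul_apply, hσi]
  rw [h0]
  congr 1
  have hL : ∀ (ρ : Equiv.Perm (Fin n)),
      ∏ j ∈ (Iic i).filter (fun j => π k < ρ j), (1 - q (ρ j))
      = ∏ j : Fin n, if j ≤ i ∧ π k < ρ j then (1 - q (ρ j)) else 1 := by
    intro ρ
    rw [Iic_eq_filter, Finset.filter_filter, Finset.prod_filter]
  rw [hL (π * σ), hL π]
  calc ∏ j : Fin n, (if j ≤ i ∧ π k < π j then (1 - q (π j)) else 1)
      = ∏ j : Fin n, (if σ j ≤ i ∧ π k < π (σ j) then (1 - q (π (σ j))) else 1) :=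
        (Equiv.prod_comp σ (fun j => if j ≤ i ∧ π k < π j then (1 - q (π j)) else 1)).symm
    _ = ∏ j : Fin n, (if j ≤ i ∧ π k < (π * σ) j then (1 - q ((π * σ) j)) else 1) := by
        apply Finset.prod_congr rfl
        intro j _
        simp only [Equiv.Perm.mul_apply, hmem j]
        exact if_congr Iff.rfl rfl rfl

lemma perm_sum_bound (q : Fin n → ℝ) (hq1 : ∀ v, q v ≤ 1) (i : Fin n) :
    ∑ π : Equiv.Perm (Fin n),
        q (π i) * ∏ j ∈ (Iic i).filter (fun j => π i < π j), (1 - q (π j))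
    ≤ (n.factorial : ℝ) / (i.1 + 1) := by
  rw [le_div_iff₀ (by positivity)]
  have hcast : ((i.1 : ℝ) + 1) = ((i.1 + 1 : ℕ) : ℝ) := by push_cast; ring
  calc (∑ π : Equiv.Perm (Fin n),
        q (π i) * ∏ j ∈ (Iic i).filter (fun j => π i < π j), (1 - q (π j))) * ((i.1 : ℝ) + 1)
      = ∑ k ∈ Iic i, ∑ π : Equiv.Perm (Fin n),
          q (π k) * ∏ j ∈ (Iic i).filter (fun j => π k < π j), (1 - q (π j)) := by
        rw [Finset.sum_congr rfl (fun k hk => sym q i k (Finset.mem_Iic.mp hk)),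
          Finset.sum_const, Fin.card_Iic, nsmul_eq_mul, hcast]
        ring
    _ = ∑ π : Equiv.Perm (Fin n), ∑ k ∈ Iic i,
          q (π k) * ∏ j ∈ (Iic i).filter (fun j => π k < π j), (1 - q (π j)) :=
        Finset.sum_comm
    _ ≤ ∑ _π : Equiv.Perm (Fin n), (1:ℝ) := by
        apply Finset.sum_le_sum
        intro π _
        have hinj : ∀ x ∈ Iic i, ∀ y ∈ Iic i, π x = π y → x = y := by
          intro x _ y _ h; exact π.injective h
        have himg : ∑ k ∈ Iic i,
            q (π k) * ∏ j ∈ (Iic i).filter (fun j => π k < π j), (1 - q (π j))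
            = ∑ u ∈ (Iic i).image π,
              q u * ∏ v ∈ ((Iic i).image π).filter (fun v => u < v), (1 - q v) := by
          rw [Finset.sum_image hinj]
          apply Finset.sum_congr rfl
          intro k _
          congr 1
          rw [Finset.filter_image, Finset.prod_image (by
            intro x _ y _ h; exact π.injective h)]
        rw [himg, telescope]
        have : (0:ℝ) ≤ ∏ v ∈ (Iic i).image π, (1 - q v) :=
          Finset.prod_nonneg (fun v _ => by linarith [hq1 v])
        linarith
    _ ≤ (n.factorial : ℝ) := by
        rw [Finset.sum_const, nsmul_eq_mul, mul_one, Finset.card_univ, Fintype.card_perm,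
          Fintype.card_fin]

lemma prod_bound (p : Fin n → Fin n → ℝ) (hp0 : ∀ i j, 0 ≤ p i j) (hp1 : ∀ i j, p i j ≤ 1)
    (hmono : ∀ i i' j, i ≤ i' → p i' j ≤ p i j) (π : Equiv.Perm (Fin n)) (i : Fin n) :
    ∏ j : Fin n, (if j = i then p i (π i)
        else if (j < i ∧ π i < π j) then 1 - p j (π j) else 1)
    ≤ p i (π i) * ∏ j ∈ (Iic i).filter (fun j => π i < π j), (1 - p i (π j)) := by
  have step1 : ∏ j : Fin n, (if j = i then p i (π i)
        else if (j < i ∧ π i < π j) then 1 - p j (π j) else 1)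
      ≤ ∏ j : Fin n, (if j = i then p i (π i)
        else if (j < i ∧ π i < π j) then 1 - p i (π j) else 1) := by
    apply Finset.prod_le_prod
    · intro j _
      by_cases hji : j = i
      · subst hji; rw [if_pos rfl]; exact hp0 _ _
      · rw [if_neg hji]
        by_cases hblock : (j < i ∧ π i < π j)
        · rw [if_pos hblock]; linarith [hp1 j (π j)]
        · rw [if_neg hblock]; norm_num
    · intro j _
      by_cases hji : j = i
      · subst hji; simp
      · rw [if_neg hji, if_neg hji]
        by_cases hblock : (j < i ∧ π i < π j)
        · rw [if_pos hblock, if_pos hblock]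
          have := hmono j i (π j) (le_of_lt hblock.1)
          linarith
        · rw [if_neg hblock, if_neg hblock]
  refine le_trans step1 (le_of_eq ?_)
  rw [← Finset.mul_prod_erase Finset.univ _ (Finset.mem_univ i), if_pos rfl]
  congr 1
  have hc : ∀ j ∈ Finset.univ.erase i,
      (if j = i then p i (π i) else if (j < i ∧ π i < π j) then 1 - p i (π j) else 1)
      = if (j < i ∧ π i < π j) then 1 - p i (π j) else 1 := by
    intro j hj
    rw [if_neg (Finset.mem_erase.mp hj).1]
  rw [Finset.prod_congr rfl hc, ← Finset.prod_filter]
  apply Finset.prod_congr _ (fun _ _ => rfl)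
  ext j
  simp only [Finset.mem_filter, Finset.mem_erase, Finset.mem_univ, Finset.mem_Iic,
    true_and, and_true]
  constructor
  · rintro ⟨_, hlt, hgt⟩
    exact ⟨le_of_lt hlt, hgt⟩
  · rintro ⟨hle, hgt⟩
    have hne : j ≠ i := fun h => by subst h; exact lt_irrefl _ hgt
    exact ⟨hne, lt_of_le_of_ne hle hne, hgt⟩

lemma harmonic_real (m : ℕ) :
    ∑ i ∈ Finset.range m, (1:ℝ) / (i + 1) ≤ 1 + Real.log m := by
  have h := harmonic_le_one_add_log m
  have hcast : ((harmonic m : ℚ) : ℝ) = ∑ i ∈ Finset.range m, (1:ℝ) / (i + 1) := by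
    rw [harmonic]
    push_cast
    simp [one_div]
  rw [← hcast]
  exact_mod_cast h

end SelectionAux

/-- In the Selection Process on `[n]` with a uniformly random arrival order and
adversarial probability vectors that are non-increasing in time
(`p i j ≥ p i' j` for `i ≤ i'`), the expected number of selected elements is
`O(log n)`: it is at most `c · log n` for an absolute constant `c`. -/
theorem selection_process_log_bound :
    ∃ c : ℝ, 0 < c ∧ ∀ (n : ℕ), 2 ≤ n → ∀ p : Fin n → Fin n → ℝ,
      (∀ i j, 0 ≤ p i j) → (∀ i j, p i j ≤ 1) →
      (∀ i i' j, i ≤ i' → p i' j ≤ p i j) →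
      (∑ π : Equiv.Perm (Fin n), ∑ b : Fin n → Bool,
          (∏ i, if b i then p i (π i) else 1 - p i (π i)) *
            (Nat.card {i : Fin n // isSelected n π b i} : ℝ)) / (Nat.factorial n : ℝ)
        ≤ c * Real.log n := by
  classical
  refine ⟨3, by norm_num, fun n hn p hp0 hp1 hmono => ?_⟩
  have hfac : (0:ℝ) < (Nat.factorial n : ℝ) := by positivity
  rw [div_le_iff₀ hfac]
  have hrearr : (∑ π : Equiv.Perm (Fin n), ∑ b : Fin n → Bool,
          (∏ i, if b i then p i (π i) else 1 - p i (π i)) *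
            (Nat.card {i : Fin n // isSelected n π b i} : ℝ))
      = ∑ i : Fin n, ∑ π : Equiv.Perm (Fin n), ∑ b : Fin n → Bool,
          (∏ j, if b j then p j (π j) else 1 - p j (π j)) *
            (if (b i = true ∧ ∀ j, j < i → b j = true → π j < π i) then (1:ℝ) else 0) := by
    have hper : ∀ π : Equiv.Perm (Fin n), ∑ b : Fin n → Bool,
          (∏ j, if b j then p j (π j) else 1 - p j (π j)) *
            (Nat.card {i : Fin n // isSelected n π b i} : ℝ)
        = ∑ i : Fin n, ∑ b : Fin n → Bool,
          (∏ j, if b j then p j (π j) else 1 - p j (π j)) *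
            (if (b i = true ∧ ∀ j, j < i → b j = true → π j < π i) then (1:ℝ) else 0) := by
      intro π
      rw [← Finset.sum_comm]
      apply Finset.sum_congr rfl
      intro b _
      rw [SelectionAux.card_eq, Finset.mul_sum]
    rw [Finset.sum_congr rfl (fun π _ => hper π)]
    exact Finset.sum_comm
  rw [hrearr]
  have hmain : ∀ i : Fin n, ∑ π : Equiv.Perm (Fin n), ∑ b : Fin n → Bool,
          (∏ j, if b j then p j (π j) else 1 - p j (π j)) *
            (if (b i = true ∧ ∀ j, j < i → b j = true → π j < π i) then (1:ℝ) else 0)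
      ≤ (Nat.factorial n : ℝ) / (i.1 + 1) := by
    intro i
    have h1 : ∀ π : Equiv.Perm (Fin n), ∑ b : Fin n → Bool,
          (∏ j, if b j then p j (π j) else 1 - p j (π j)) *
            (if (b i = true ∧ ∀ j, j < i → b j = true → π j < π i) then (1:ℝ) else 0)
        ≤ p i (π i) * ∏ j ∈ (Finset.Iic i).filter (fun j => π i < π j), (1 - p i (π j)) := by
      intro π
      rw [SelectionAux.coin_sum p π i]
      exact SelectionAux.prod_bound p hp0 hp1 hmono π i
    calc ∑ π : Equiv.Perm (Fin n), ∑ b : Fin n → Bool,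
          (∏ j, if b j then p j (π j) else 1 - p j (π j)) *
            (if (b i = true ∧ ∀ j, j < i → b j = true → π j < π i) then (1:ℝ) else 0)
        ≤ ∑ π : Equiv.Perm (Fin n),
            p i (π i) * ∏ j ∈ (Finset.Iic i).filter (fun j => π i < π j), (1 - p i (π j)) :=
          Finset.sum_le_sum (fun π _ => h1 π)
      _ ≤ (Nat.factorial n : ℝ) / (i.1 + 1) :=
          SelectionAux.perm_sum_bound (p i) (fun v => hp1 i v) i
  have hlogn : (1:ℝ) + Real.log n ≤ 3 * Real.log n := by
    have h2 : Real.log 2 ≤ Real.log n := by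
      apply Real.log_le_log (by norm_num)
      exact_mod_cast hn
    have := Real.log_two_gt_d9
    linarith
  have hharm := SelectionAux.harmonic_real n
  have hlogpos : (0:ℝ) ≤ Real.log n := by
    apply Real.log_nonneg
    exact_mod_cast le_trans (by norm_num) hn
  calc ∑ i : Fin n, ∑ π : Equiv.Perm (Fin n), ∑ b : Fin n → Bool,
          (∏ j, if b j then p j (π j) else 1 - p j (π j)) *
            (if (b i = true ∧ ∀ j, j < i → b j = true → π j < π i) then (1:ℝ) else 0)
      ≤ ∑ i : Fin n, (Nat.factorial n : ℝ) / (i.1 + 1) :=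
        Finset.sum_le_sum (fun i _ => hmain i)
    _ = (Nat.factorial n : ℝ) * ∑ i ∈ Finset.range n, (1:ℝ) / (i + 1) := by
        rw [Finset.mul_sum, Fin.sum_univ_eq_sum_range (fun k => (Nat.factorial n : ℝ) / (k + 1))]
        apply Finset.sum_congr rfl
        intro i _
        rw [div_eq_mul_one_div]
    _ ≤ (Nat.factorial n : ℝ) * (1 + Real.log n) := by
        apply mul_le_mul_of_nonneg_left hharm (le_of_lt hfac)
    _ ≤ 3 * Real.log n * (Nat.factorial n : ℝ) := by
        nlinarith [hlogn, hfac]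
end
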